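/- If A is an n×n real matrix with all eigenvalues in the open unit disc, (A,B) is reachable (i.e., the block matrix [B, AB, ..., A^{n-1}B] has rank n), and P satisfies the discrete Lyapunov equation P = A P Aᵀ + B Bᵀ, then P is positive definite. -/

import Mathlib

open Filter Topology Matrix
open scoped ENNReal NNReal

lemma aux_pow_norm_le {A : Type*} [NormedRing A] [NormedAlgebra ℂ A]
    [CompleteSpace A] (a : A) (h : spectralRadius ℂ a < 1) :
    ∃ r : ℝ, 0 ≤ r ∧ r < 1 ∧ ∀ᶠ m : ℕ in atTop, ‖a ^ m‖ ≤ r ^ m := by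
  obtain ⟨c, hc1, hc2⟩ := exists_between h
  have hcne : c ≠ ⊤ := (hc2.trans_le le_top).ne
  refine ⟨c.toReal, ENNReal.toReal_nonneg, ?_, ?_⟩
  · have := ENNReal.toReal_lt_toReal hcne (by norm_num : (1:ℝ≥0∞) ≠ ⊤)
    simpa using this.mpr hc2
  · have hev : ∀ᶠ m : ℕ in atTop,
        (‖a ^ m‖₊ : ℝ≥0∞) ^ (1 / (m:ℝ)) < c :=
      (spectrum.pow_nnnorm_pow_one_div_tendsto_nhds_spectralRadius a).eventually_lt_const hc1
    filter_upwards [hev, eventually_ge_atTop 1] with m hm hm1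
    have hmne : (m : ℝ) ≠ 0 := by positivity
    have : (‖a ^ m‖₊ : ℝ≥0∞) ≤ c ^ m := by
      have h2 : ((‖a ^ m‖₊ : ℝ≥0∞) ^ (1 / (m:ℝ))) ^ (m:ℝ) ≤ c ^ (m:ℝ) :=
        ENNReal.rpow_le_rpow hm.le (by positivity)
      rwa [← ENNReal.rpow_mul, one_div_mul_cancel hmne, ENNReal.rpow_one,
        ENNReal.rpow_natCast] at h2
    calc ‖a ^ m‖ = ((‖a ^ m‖₊ : ℝ≥0∞)).toReal := by simp
      _ ≤ (c ^ m).toReal := ENNReal.toReal_mono (by simp [hcne]) this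
      _ = c.toReal ^ m := by simp [ENNReal.toReal_pow]

lemma aux_entries_tendsto {n : ℕ} (A : Matrix (Fin n) (Fin n) ℝ)
    (hA : ∀ μ ∈ spectrum ℂ (A.map (algebraMap ℝ ℂ)), ‖μ‖ < 1) (hn : 0 < n) (i j : Fin n) :
    Tendsto (fun m : ℕ => (A ^ m) i j) atTop (𝓝 0) := by
  haveI : Nonempty (Fin n) := ⟨⟨0, hn⟩⟩
  letI := Matrix.linftyOpNormedRing (n := Fin n) (α := ℂ)
  letI := Matrix.linftyOpNormedAlgebra (R := ℂ) (n := Fin n) (α := ℂ)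
  set M : Matrix (Fin n) (Fin n) ℂ := A.map (algebraMap ℝ ℂ) with hM
  have hρ : spectralRadius ℂ M < 1 := by
    have := spectrum.spectralRadius_lt_of_forall_lt (a := M) (r := 1)
      (fun z hz => by simpa [← norm_toNNReal] using Real.toNNReal_lt_one.mpr (hA z hz))
    simpa using this
  obtain ⟨r, hr0, hr1, hev⟩ := aux_pow_norm_le M hρ
  have hMp : ∀ m : ℕ, M ^ m = (A ^ m).map (algebraMap ℝ ℂ) := by
    intro m
    have : ((algebraMap ℝ ℂ).mapMatrix (A ^ m) : Matrix (Fin n) (Fin n) ℂ)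
        = ((algebraMap ℝ ℂ).mapMatrix A) ^ m := map_pow _ _ _
    simpa [RingHom.mapMatrix_apply, hM] using this.symm
  have hbound : ∀ᶠ m : ℕ in atTop, ‖(A ^ m) i j‖ ≤ r ^ m := by
    filter_upwards [hev] with m hm
    have h1 : ‖(M ^ m) i j‖₊ ≤ ‖M ^ m‖₊ := by
      rw [Matrix.linfty_opNNNorm_def]
      calc ‖(M ^ m) i j‖₊ ≤ ∑ j' : Fin n, ‖(M ^ m) i j'‖₊ :=
            Finset.single_le_sum (f := fun j' => ‖(M ^ m) i j'‖₊)
              (fun k _ => zero_le) (Finset.mem_univ j)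
        _ ≤ Finset.univ.sup (fun i' => ∑ j' : Fin n, ‖(M ^ m) i' j'‖₊) :=
            Finset.le_sup (f := fun i' => ∑ j' : Fin n, ‖(M ^ m) i' j'‖₊) (Finset.mem_univ i)
    have h2 : ‖(M ^ m) i j‖ = ‖(A ^ m) i j‖ := by
      rw [hMp]; simp [Matrix.map_apply]
    calc ‖(A ^ m) i j‖ = ‖(M ^ m) i j‖ := h2.symm
      _ ≤ ‖M ^ m‖ := h1
      _ ≤ r ^ m := hm
  exact squeeze_zero_norm' hbound (tendsto_pow_atTop_nhds_zero_of_lt_one hr0 hr1)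

lemma aux_dp_nonneg {ι : Type*} [Fintype ι] (v : ι → ℝ) : 0 ≤ v ⬝ᵥ v :=
  Finset.sum_nonneg fun _ _ => mul_self_nonneg _

theorem stmt_0 {n p : ℕ} (A : Matrix (Fin n) (Fin n) ℝ) (B : Matrix (Fin n) (Fin p) ℝ)
    (hA : ∀ μ ∈ spectrum ℂ (A.map (algebraMap ℝ ℂ)), ‖μ‖ < 1)
    (hreach : (Matrix.of fun (i : Fin n) (kj : Fin n × Fin p) =>
      (A ^ (kj.1 : ℕ) * B) i kj.2).rank = n)
    (P : Matrix (Fin n) (Fin n) ℝ)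
    (hP : P = A * P * Aᵀ + B * Bᵀ) : P.PosDef := by
  rcases Nat.eq_zero_or_pos n with hn | hn
  · subst hn
    refine Matrix.PosDef.of_dotProduct_mulVec_pos (by ext i j; exact i.elim0) fun x hx => absurd (funext fun i => i.elim0) hx
  set S : ℕ → Matrix (Fin n) (Fin n) ℝ :=
    fun m => ∑ k ∈ Finset.range m, A ^ k * B * Bᵀ * (Aᵀ) ^ k with hS
  have key : ∀ m, P = S m + A ^ m * P * (Aᵀ) ^ m := by
    intro m
    induction m with
    | zero => simp [hS]
    | succ m ih =>
      calc P = S m + A ^ m * P * (Aᵀ) ^ m := ih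
        _ = S m + A ^ m * (A * P * Aᵀ + B * Bᵀ) * (Aᵀ) ^ m := by rw [← hP]
        _ = S (m + 1) + A ^ (m + 1) * P * (Aᵀ) ^ (m + 1) := by
            simp only [hS, Finset.sum_range_succ, pow_succ A m, pow_succ' Aᵀ m, mul_add,
              add_mul, ← Matrix.mul_assoc]
            abel
  have hrem : ∀ i j : Fin n,
      Tendsto (fun m : ℕ => (A ^ m * P * (Aᵀ) ^ m) i j) atTop (𝓝 0) := by
    intro i j
    have hentry : ∀ m : ℕ, (A ^ m * P * (Aᵀ) ^ m) i j
        = ∑ l : Fin n, (∑ k : Fin n, (A ^ m) i k * P k l) * (A ^ m) j l := by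
      intro m
      simp [Matrix.mul_apply, ← Matrix.transpose_pow, Matrix.transpose_apply]
    simp only [hentry]
    have : Tendsto (fun m : ℕ => ∑ l : Fin n,
        (∑ k : Fin n, (A ^ m) i k * P k l) * (A ^ m) j l) atTop (𝓝 (∑ l : Fin n, 0)) := by
      refine tendsto_finset_sum _ fun l _ => ?_
      have h1 : Tendsto (fun m : ℕ => ∑ k : Fin n, (A ^ m) i k * P k l) atTop
          (𝓝 (∑ k : Fin n, 0)) :=
        tendsto_finset_sum _ fun k _ => by
          simpa using (aux_entries_tendsto A hA hn i k).mul_const (P k l)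
      have h2 := h1.mul (aux_entries_tendsto A hA hn j l)
      simpa using h2
    simpa using this
  have hSsymm : ∀ m, (S m)ᵀ = S m := by
    intro m
    simp only [hS, Matrix.transpose_sum]
    refine Finset.sum_congr rfl fun k _ => ?_
    simp only [Matrix.transpose_mul, Matrix.transpose_pow, Matrix.transpose_transpose,
      ← Matrix.mul_assoc]
  have hSentry : ∀ i j : Fin n, Tendsto (fun m => (S m) i j) atTop (𝓝 (P i j)) := by
    intro i j
    have heq : ∀ m, (S m) i j = P i j - (A ^ m * P * (Aᵀ) ^ m) i j := by
      intro m
      have h := congrArg (fun M : Matrix (Fin n) (Fin n) ℝ => M i j) (key m)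
      simp only [Matrix.add_apply] at h
      linarith
    simp only [heq]
    simpa using tendsto_const_nhds.sub (hrem i j)
  have hsymm : ∀ i j : Fin n, P i j = P j i := by
    intro i j
    have h1 := hSentry i j
    have h2 : Tendsto (fun m => (S m) i j) atTop (𝓝 (P j i)) := by
      have hsm : ∀ m, (S m) i j = (S m) j i := by
        intro m
        conv_rhs => rw [← hSsymm m]
        rfl
      simpa only [hsm] using hSentry j i
    exact tendsto_nhds_unique h1 h2
  have hHerm : P.IsHermitian := by
    show Pᴴ = P
    rw [Matrix.conjTranspose_eq_transpose_of_trivial]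
    ext i j
    exact hsymm j i
  refine Matrix.PosDef.of_dotProduct_mulVec_pos hHerm fun x hx => ?_
  have hterm : ∀ k : ℕ, x ⬝ᵥ (A ^ k * B * Bᵀ * (Aᵀ) ^ k) *ᵥ x
      = ((A ^ k * B)ᵀ *ᵥ x) ⬝ᵥ ((A ^ k * B)ᵀ *ᵥ x) := by
    intro k
    have hMM : A ^ k * B * Bᵀ * (Aᵀ) ^ k = (A ^ k * B) * (A ^ k * B)ᵀ := by
      simp only [Matrix.transpose_mul, Matrix.transpose_pow]
      rw [Matrix.mul_assoc]
    rw [hMM, ← Matrix.mulVec_mulVec, Matrix.dotProduct_mulVec, ← Matrix.mulVec_transpose]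
  have hSq : ∀ m, x ⬝ᵥ (S m) *ᵥ x
      = ∑ k ∈ Finset.range m, ((A ^ k * B)ᵀ *ᵥ x) ⬝ᵥ ((A ^ k * B)ᵀ *ᵥ x) := by
    intro m
    induction m with
    | zero => simp [hS]
    | succ m ih =>
      have hstep : S (m + 1) = S m + A ^ m * B * Bᵀ * (Aᵀ) ^ m := by
        simp [hS, Finset.sum_range_succ]
      rw [hstep, Matrix.add_mulVec, dotProduct_add, ih, Finset.sum_range_succ, hterm m]
  have hquad : ∀ m, x ⬝ᵥ P *ᵥ x
      = (∑ k ∈ Finset.range m, ((A ^ k * B)ᵀ *ᵥ x) ⬝ᵥ ((A ^ k * B)ᵀ *ᵥ x))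
        + x ⬝ᵥ (A ^ m * P * (Aᵀ) ^ m) *ᵥ x := by
    intro m
    calc x ⬝ᵥ P *ᵥ x = x ⬝ᵥ (S m + A ^ m * P * (Aᵀ) ^ m) *ᵥ x := by rw [← key m]
      _ = _ := by rw [Matrix.add_mulVec, dotProduct_add, hSq m]
  have hxPx : (0:ℝ) < x ⬝ᵥ P *ᵥ x := by
    set q : ℕ → ℝ :=
      fun m => ∑ k ∈ Finset.range m, ((A ^ k * B)ᵀ *ᵥ x) ⬝ᵥ ((A ^ k * B)ᵀ *ᵥ x) with hq
    have hqmono : Monotone q := by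
      apply monotone_nat_of_le_succ
      intro m
      rw [hq]
      simp only [Finset.sum_range_succ]
      exact le_add_of_nonneg_right (aux_dp_nonneg _)
    have hqtend : Tendsto q atTop (𝓝 (x ⬝ᵥ P *ᵥ x)) := by
      have hrx : Tendsto (fun m => x ⬝ᵥ (A ^ m * P * (Aᵀ) ^ m) *ᵥ x) atTop (𝓝 0) := by
        have hux : ∀ m : ℕ, x ⬝ᵥ (A ^ m * P * (Aᵀ) ^ m) *ᵥ x
            = ∑ i : Fin n, x i * ∑ j : Fin n, (A ^ m * P * (Aᵀ) ^ m) i j * x j := by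
          intro m; simp [dotProduct, Matrix.mulVec, dotProduct]
        simp only [hux]
        have : Tendsto (fun m : ℕ => ∑ i : Fin n, x i *
            ∑ j : Fin n, (A ^ m * P * (Aᵀ) ^ m) i j * x j) atTop (𝓝 (∑ i : Fin n, 0)) := by
          refine tendsto_finset_sum _ fun i _ => ?_
          have h1 : Tendsto (fun m : ℕ => ∑ j : Fin n, (A ^ m * P * (Aᵀ) ^ m) i j * x j) atTop
              (𝓝 (∑ j : Fin n, 0)) :=
            tendsto_finset_sum _ fun j _ => by simpa using (hrem i j).mul_const (x j)
          simpa using (tendsto_const_nhds (x := x i)).mul h1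
        simpa using this
      have hqeq : q = fun m => x ⬝ᵥ P *ᵥ x - x ⬝ᵥ (A ^ m * P * (Aᵀ) ^ m) *ᵥ x := by
        funext m
        rw [hq]
        rw [hquad m]
        ring
      rw [hqeq]
      simpa using tendsto_const_nhds.sub hrx
    have hqle : q n ≤ x ⬝ᵥ P *ᵥ x := hqmono.ge_of_tendsto hqtend n
    have hqpos : 0 < q n := by
      rcases lt_or_eq_of_le (Finset.sum_nonneg fun k (_ : k ∈ Finset.range n) =>
        aux_dp_nonneg ((A ^ k * B)ᵀ *ᵥ x)) with h | h
      · exact h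
      · exfalso
        have hall : ∀ k ∈ Finset.range n,
            ((A ^ k * B)ᵀ *ᵥ x) ⬝ᵥ ((A ^ k * B)ᵀ *ᵥ x) = 0 :=
          (Finset.sum_eq_zero_iff_of_nonneg
            (fun k _ => aux_dp_nonneg ((A ^ k * B)ᵀ *ᵥ x))).mp h.symm
        have hvz : ∀ k ∈ Finset.range n, (A ^ k * B)ᵀ *ᵥ x = 0 := fun k hk =>
          dotProduct_self_eq_zero.mp (hall k hk)
        set R : Matrix (Fin n) (Fin n × Fin p) ℝ :=
          Matrix.of fun (i : Fin n) (kj : Fin n × Fin p) => (A ^ (kj.1 : ℕ) * B) i kj.2 with hR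
        have hsurj : Function.Surjective R.mulVecLin := by
          rw [← LinearMap.range_eq_top]
          apply Submodule.eq_top_of_finrank_eq
          rw [← Matrix.rank]
          simpa [hR] using hreach
        obtain ⟨v, hv⟩ := hsurj x
        have hxR : x ᵥ* R = 0 := by
          funext kj
          have hz := congrFun (hvz kj.1 (Finset.mem_range.mpr kj.1.isLt)) kj.2
          simp only [Matrix.mulVec, Matrix.transpose_apply, dotProduct, Pi.zero_apply] at hz
          simp only [Matrix.vecMul, dotProduct, hR, Matrix.of_apply, Pi.zero_apply]
          rw [← hz]
          exact Finset.sum_congr rfl fun i _ => mul_comm _ _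
        have hxx : x ⬝ᵥ x = 0 := by
          have hv' : R *ᵥ v = x := hv
          calc x ⬝ᵥ x = x ⬝ᵥ R *ᵥ v := by rw [hv']
            _ = (x ᵥ* R) ⬝ᵥ v := Matrix.dotProduct_mulVec x R v
            _ = 0 := by rw [hxR]; simp
        exact hx (dotProduct_self_eq_zero.mp hxx)
    exact lt_of_lt_of_le hqpos hqle
  simpa using hxPx
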